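/- Let D be an oriented knot diagram with n ≥ 1 crossings, modeled by a Gauss code g, and let D' be the diagram obtained from D by a crossing change at a crossing c₀. Then |span X_{D'}(t) − span X_D(t)| ≤ 2. -/
import Mathlib


open Polynomial Finset

lemma val_sub_one' {m : ℕ} [NeZero m] {y : ZMod m} (hy : y ≠ 0) : (y - 1).val + 1 = y.val := by
  have h0 : y.val ≠ 0 := by simpa [ZMod.val_eq_zero] using hy
  have h1 : 1 ≤ y.val := Nat.one_le_iff_ne_zero.2 h0
  have h2 : y - 1 = ((y.val - 1 : ℕ) : ZMod m) := by
    have := ZMod.natCast_zmod_val y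
    push_cast [h1]
    rw [this]
  rw [h2, ZMod.val_cast_of_lt (by have := ZMod.val_lt y; omega)]
  omega

lemma val_neg_one' {m : ℕ} (hm : 1 ≤ m) : (-1 : ZMod m).val = m - 1 := by
  haveI : NeZero m := ⟨by omega⟩
  have h2 : (-1 : ZMod m) = ((m - 1 : ℕ) : ZMod m) := by
    have := ZMod.natCast_self m
    push_cast [hm]
    rw [this]; ring

  rw [h2, ZMod.val_cast_of_lt (by omega)]


/-- An oriented knot diagram with `n` crossings, modeled by its oriented Gauss code. -/
structure GaussCode (n : ℕ) where
  g : ZMod (2 * n) → Fin n × Bool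
  o : Fin n → ZMod (2 * n)
  u : Fin n → ZMod (2 * n)
  over_iff : ∀ (c : Fin n) (e : ZMod (2 * n)), g e = (c, true) ↔ e = o c
  under_iff : ∀ (c : Fin n) (e : ZMod (2 * n)), g e = (c, false) ↔ e = u c

namespace GaussCode

variable {n : ℕ}

/-- The warping degree of the base position `e`: the number of crossings whose
under-passage occurs strictly before its over-passage when traversing the diagram
starting at `e`. -/
def d (D : GaussCode n) (e : ZMod (2 * n)) : ℕ :=
  (Finset.univ.filter fun c : Fin n => (D.u c - e).val < (D.o c - e).val).card

/-- The warping crossing polynomial. -/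
noncomputable def Xpoly (D : GaussCode n) : Polynomial ℤ :=
  ∑ c : Fin n, Polynomial.X ^ D.d (D.o c)

/-- The warping polynomial. -/
noncomputable def Wpoly (D : GaussCode n) : Polynomial ℤ :=
  ∑ k ∈ Finset.range (2 * n), Polynomial.X ^ D.d (k : ZMod (2 * n))

/-- The warping degree of the diagram: minimum over all base positions. -/
noncomputable def wdeg (D : GaussCode n) : ℕ :=
  sInf (Set.range fun e : ZMod (2 * n) => D.d e)

/-- The diagram is alternating. -/
def Alternating (D : GaussCode n) : Prop :=
  ∀ e : ZMod (2 * n), (D.g e).2 ≠ (D.g (e + 1)).2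

lemma g_o (D : GaussCode n) (c : Fin n) : D.g (D.o c) = (c, true) :=
  (D.over_iff c _).2 rfl

lemma g_u (D : GaussCode n) (c : Fin n) : D.g (D.u c) = (c, false) :=
  (D.under_iff c _).2 rfl

lemma o_ne_u (D : GaussCode n) (c c' : Fin n) : D.o c ≠ D.u c' := by
  intro h
  have h1 := D.g_o c
  rw [h, D.g_u] at h1
  simp at h1

lemma o_inj (D : GaussCode n) {c c' : Fin n} (h : D.o c = D.o c') : c = c' := by
  have h1 := D.g_o c
  rw [h, D.g_o] at h1
  simpa using h1.symm

lemma u_inj (D : GaussCode n) {c c' : Fin n} (h : D.u c = D.u c') : c = c' := by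
  have h1 := D.g_u c
  rw [h, D.g_u] at h1
  simpa using h1.symm

/-- Shifting the base point past a position not equal to `o c` or `u c`
preserves the comparison for crossing `c`. -/
lemma cond_shift (hn : 1 ≤ n) (D : GaussCode n) {e : ZMod (2 * n)} {c : Fin n}
    (ho : D.o c ≠ e) (hu : D.u c ≠ e) :
    ((D.u c - (e + 1)).val < (D.o c - (e + 1)).val ↔ (D.u c - e).val < (D.o c - e).val) := by
  haveI : NeZero (2 * n) := ⟨by omega⟩
  have h1 : D.u c - (e + 1) = (D.u c - e) - 1 := by ring
  have h2 : D.o c - (e + 1) = (D.o c - e) - 1 := by ring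
  have h3 : D.u c - e ≠ 0 := sub_ne_zero.2 hu
  have h4 : D.o c - e ≠ 0 := sub_ne_zero.2 ho
  have h5 := val_sub_one' h3
  have h6 := val_sub_one' h4
  rw [h1, h2]
  omega

lemma d_o_succ (hn : 1 ≤ n) (D : GaussCode n) (c : Fin n) :
    D.d (D.o c + 1) = D.d (D.o c) + 1 := by
  haveI : NeZero (2 * n) := ⟨by omega⟩
  set e := D.o c with he
  have key : (Finset.univ.filter fun c' : Fin n =>
      (D.u c' - (e + 1)).val < (D.o c' - (e + 1)).val) =
      insert c (Finset.univ.filter fun c' : Fin n =>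
        (D.u c' - e).val < (D.o c' - e).val) := by
    ext c'
    by_cases hc : c' = c
    · subst hc
      simp only [Finset.mem_filter, Finset.mem_univ, true_and, Finset.mem_insert, true_or,
        iff_true]
      have h1 : D.o c' - (e + 1) = -1 := by rw [he]; ring
      have h2 : D.u c' - e ≠ 0 := sub_ne_zero.2 (fun h => D.o_ne_u c' c' (he ▸ h).symm)
      have h3 : D.u c' - (e + 1) = (D.u c' - e) - 1 := by ring
      have h4 := val_sub_one' h2
      have h5 := ZMod.val_lt (D.u c' - e)
      rw [h1, h3, val_neg_one' (by omega)]
      omega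
    · have ho : D.o c' ≠ e := fun h => hc (D.o_inj (he ▸ h))
      have hu : D.u c' ≠ e := fun h => D.o_ne_u c c' (he ▸ h).symm
      simp only [Finset.mem_filter, Finset.mem_univ, true_and, Finset.mem_insert, hc, false_or]
      exact cond_shift hn D ho hu
  have hnotmem : c ∉ (Finset.univ.filter fun c' : Fin n =>
      (D.u c' - e).val < (D.o c' - e).val) := by
    simp only [Finset.mem_filter, Finset.mem_univ, true_and, not_lt]
    have : D.o c - e = 0 := by rw [he]; ring
    rw [this, ZMod.val_zero]
    omega
  show _ = _
  rw [d, d, key, Finset.card_insert_of_notMem hnotmem]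

lemma d_u_succ (hn : 1 ≤ n) (D : GaussCode n) (c : Fin n) :
    D.d (D.u c) = D.d (D.u c + 1) + 1 := by
  haveI : NeZero (2 * n) := ⟨by omega⟩
  set e := D.u c with he
  have key : (Finset.univ.filter fun c' : Fin n =>
      (D.u c' - e).val < (D.o c' - e).val) =
      insert c (Finset.univ.filter fun c' : Fin n =>
        (D.u c' - (e + 1)).val < (D.o c' - (e + 1)).val) := by
    ext c'
    by_cases hc : c' = c
    · subst hc
      simp only [Finset.mem_filter, Finset.mem_univ, true_and, Finset.mem_insert, true_or,
        iff_true]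
      have h1 : D.u c' - e = 0 := by rw [he]; ring
      have h2 : D.o c' - e ≠ 0 := sub_ne_zero.2 (fun h => D.o_ne_u c' c' (he ▸ h))
      have h3 : 0 < (D.o c' - e).val := by
        rcases Nat.eq_zero_or_pos (D.o c' - e).val with h | h
        · exact absurd ((ZMod.val_eq_zero _).1 h) h2
        · exact h
      rw [h1, ZMod.val_zero]
      exact h3
    · have ho : D.o c' ≠ e := fun h => (D.o_ne_u c' c) (he ▸ h)
      have hu : D.u c' ≠ e := fun h => hc (D.u_inj (he ▸ h))
      simp only [Finset.mem_filter, Finset.mem_univ, true_and, Finset.mem_insert, hc, false_or]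
      exact (cond_shift hn D ho hu).symm
  have hnotmem : c ∉ (Finset.univ.filter fun c' : Fin n =>
      (D.u c' - (e + 1)).val < (D.o c' - (e + 1)).val) := by
    simp only [Finset.mem_filter, Finset.mem_univ, true_and, not_lt]
    have h1 : D.u c - (e + 1) = -1 := by rw [he]; ring
    have h2 : (D.o c - (e + 1)).val < 2 * n := ZMod.val_lt _
    rw [h1, val_neg_one' (by omega)]
    omega
  show _ = _
  rw [d, d, key, Finset.card_insert_of_notMem hnotmem]






/-- Every position is either an over- or an under-passage. -/
lemma eq_o_or_u (D : GaussCode n) (e : ZMod (2 * n)) :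
    (∃ c, e = D.o c) ∨ (∃ c, e = D.u c) := by
  rcases hb : (D.g e).2 with _ | _
  · right
    exact ⟨(D.g e).1, (D.under_iff _ _).1 (by rw [← hb])⟩
  · left
    exact ⟨(D.g e).1, (D.over_iff _ _).1 (by rw [← hb])⟩

lemma d_u_le (hn : 1 ≤ n) (D : GaussCode n) (c : Fin n) :
    D.d (D.u c) ≤ (Finset.univ.sup fun c' => D.d (D.o c')) + 1 := by
  haveI : NeZero (2 * n) := ⟨by omega⟩
  set A := Finset.univ.sup fun c' => D.d (D.o c') with hA
  obtain ⟨e, -, hM⟩ := Finset.exists_mem_eq_sup (Finset.univ : Finset (ZMod (2 * n)))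
    Finset.univ_nonempty (fun e => D.d e)
  set M := Finset.univ.sup fun e : ZMod (2 * n) => D.d e with hMdef
  have huc : D.d (D.u c) ≤ M := Finset.le_sup (Finset.mem_univ _)
  have hM' : ∀ x : ZMod (2 * n), D.d x ≤ M := fun x => Finset.le_sup (Finset.mem_univ _)
  rcases D.eq_o_or_u (e - 1) with ⟨c', hc'⟩ | ⟨c', hc'⟩
  · have h1 : e = D.o c' + 1 := by rw [← hc']; ring
    have h2 : D.d e = D.d (D.o c') + 1 := by rw [h1, d_o_succ hn]
    have h3 : D.d (D.o c') ≤ A := Finset.le_sup (f := fun c' => D.d (D.o c')) (Finset.mem_univ _)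
    omega
  · have h1 : e = D.u c' + 1 := by rw [← hc']; ring
    have h2 : D.d (D.u c') = D.d e + 1 := by rw [h1, ← d_u_succ hn]
    have h3 := hM' (D.u c')
    omega

lemma d_u_ge (hn : 1 ≤ n) (D : GaussCode n) (c : Fin n) :
    (Finset.univ.inf' ⟨⟨0, hn⟩, Finset.mem_univ _⟩ fun c' => D.d (D.o c')) + 1
      ≤ D.d (D.u c) := by
  haveI : NeZero (2 * n) := ⟨by omega⟩
  set a := Finset.univ.inf' ⟨⟨0, hn⟩, Finset.mem_univ _⟩ fun c' => D.d (D.o c') with ha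
  obtain ⟨e, -, hm⟩ := Finset.exists_mem_eq_inf' (s := (Finset.univ : Finset (ZMod (2 * n))))
    Finset.univ_nonempty (fun e => D.d e)
  set m := Finset.univ.inf' Finset.univ_nonempty fun e : ZMod (2 * n) => D.d e with hmdef
  have hm' : ∀ x : ZMod (2 * n), m ≤ D.d x := fun x => Finset.inf'_le _ (Finset.mem_univ _)
  have ham : a ≤ m := by
    rcases D.eq_o_or_u e with ⟨c', hc'⟩ | ⟨c', hc'⟩
    · have : a ≤ D.d (D.o c') := Finset.inf'_le _ (Finset.mem_univ _)
      rw [hc'] at hm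
      omega
    · have h2 : D.d e = D.d (e + 1) + 1 := by rw [hc', d_u_succ hn, ← hc']
      have := hm' (e + 1)
      omega
  have h2 : D.d (D.u c) = D.d (D.u c + 1) + 1 := d_u_succ hn D c
  have := hm' (D.u c + 1)
  omega






lemma d_close (D D' : GaussCode n) (c₀ : Fin n)
    (hO : ∀ c, c ≠ c₀ → D'.o c = D.o c) (hU : ∀ c, c ≠ c₀ → D'.u c = D.u c)
    (e : ZMod (2 * n)) : D'.d e ≤ D.d e + 1 ∧ D.d e ≤ D'.d e + 1 := by
  constructor
  · have hsub : (Finset.univ.filter fun c : Fin n => (D'.u c - e).val < (D'.o c - e).val) ⊆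
        insert c₀ (Finset.univ.filter fun c : Fin n => (D.u c - e).val < (D.o c - e).val) := by
      intro c hc
      by_cases h : c = c₀
      · exact h ▸ Finset.mem_insert_self _ _
      · refine Finset.mem_insert_of_mem ?_
        simp only [Finset.mem_filter, Finset.mem_univ, true_and] at hc ⊢
        rwa [hO c h, hU c h] at hc
    calc D'.d e ≤ (insert c₀ (Finset.univ.filter fun c : Fin n =>
          (D.u c - e).val < (D.o c - e).val)).card := Finset.card_le_card hsub
      _ ≤ D.d e + 1 := Finset.card_insert_le _ _
  · have hsub : (Finset.univ.filter fun c : Fin n => (D.u c - e).val < (D.o c - e).val) ⊆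
        insert c₀ (Finset.univ.filter fun c : Fin n => (D'.u c - e).val < (D'.o c - e).val) := by
      intro c hc
      by_cases h : c = c₀
      · exact h ▸ Finset.mem_insert_self _ _
      · refine Finset.mem_insert_of_mem ?_
        simp only [Finset.mem_filter, Finset.mem_univ, true_and] at hc ⊢
        rwa [hO c h, hU c h]
    calc D.d e ≤ _ := Finset.card_le_card hsub
      _ ≤ D'.d e + 1 := Finset.card_insert_le _ _

lemma d_at_u (hn : 1 ≤ n) (D D' : GaussCode n) (c₀ : Fin n)
    (hO : ∀ c, c ≠ c₀ → D'.o c = D.o c) (hU : ∀ c, c ≠ c₀ → D'.u c = D.u c)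
    (hO0 : D'.o c₀ = D.u c₀) (hU0 : D'.u c₀ = D.o c₀) :
    D'.d (D.u c₀) + 1 ≤ D.d (D.u c₀) := by
  haveI : NeZero (2 * n) := ⟨by omega⟩
  set e := D.u c₀ with he
  have hP'c₀ : ¬ ((D'.u c₀ - e).val < (D'.o c₀ - e).val) := by
    rw [hO0, hU0, he]
    have : D.u c₀ - D.u c₀ = 0 := by ring
    rw [this, ZMod.val_zero]
    omega
  have hmem : c₀ ∈ (Finset.univ.filter fun c : Fin n => (D.u c - e).val < (D.o c - e).val) := by
    simp only [Finset.mem_filter, Finset.mem_univ, true_and]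
    have h1 : D.u c₀ - e = 0 := by rw [he]; ring
    have h2 : D.o c₀ - e ≠ 0 := sub_ne_zero.2 (fun h => D.o_ne_u c₀ c₀ (he ▸ h))
    rw [h1, ZMod.val_zero]
    rcases Nat.eq_zero_or_pos (D.o c₀ - e).val with h | h
    · exact absurd ((ZMod.val_eq_zero _).1 h) h2
    · exact h
  have hsub : (Finset.univ.filter fun c : Fin n => (D'.u c - e).val < (D'.o c - e).val) ⊆
      (Finset.univ.filter fun c : Fin n => (D.u c - e).val < (D.o c - e).val).erase c₀ := by
    intro c hc
    simp only [Finset.mem_filter, Finset.mem_univ, true_and] at hc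
    have hne : c ≠ c₀ := fun h => hP'c₀ (h ▸ hc)
    refine Finset.mem_erase.2 ⟨hne, ?_⟩
    simp only [Finset.mem_filter, Finset.mem_univ, true_and]
    rwa [hO c hne, hU c hne] at hc
  have h1 : D'.d e ≤ _ := Finset.card_le_card hsub
  rw [Finset.card_erase_of_mem hmem] at h1
  have h2 : 1 ≤ D.d e := Finset.card_pos.2 ⟨c₀, hmem⟩
  have h3 : D.d e = (Finset.univ.filter fun c : Fin n =>
      (D.u c - e).val < (D.o c - e).val).card := rfl
  show D'.d e + 1 ≤ D.d e
  omega

lemma coeff_Xpoly (D : GaussCode n) (k : ℕ) :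
    D.Xpoly.coeff k = ((Finset.univ.filter fun c => D.d (D.o c) = k).card : ℤ) := by
  rw [Xpoly, Polynomial.finset_sum_coeff, Finset.card_filter]
  push_cast
  refine Finset.sum_congr rfl fun c _ => ?_
  rw [Polynomial.coeff_X_pow]
  by_cases h : D.d (D.o c) = k
  · simp [h]
  · rw [if_neg (fun hk => h hk.symm), if_neg h]

lemma Xpoly_ne_zero (hn : 1 ≤ n) (D : GaussCode n) : D.Xpoly ≠ 0 := by
  intro h
  have h1 := congrArg (Polynomial.eval 1) h
  rw [Xpoly] at h1
  simp [Polynomial.eval_finset_sum] at h1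
  omega

lemma Xpoly_natDegree (hn : 1 ≤ n) (D : GaussCode n) :
    D.Xpoly.natDegree = Finset.univ.sup fun c => D.d (D.o c) := by
  apply le_antisymm
  · rw [Polynomial.natDegree_le_iff_coeff_eq_zero]
    intro m hm
    rw [coeff_Xpoly]
    norm_cast
    rw [Finset.card_eq_zero, Finset.filter_eq_empty_iff]
    intro c _
    have : D.d (D.o c) ≤ Finset.univ.sup fun c => D.d (D.o c) :=
      Finset.le_sup (f := fun c => D.d (D.o c)) (Finset.mem_univ _)
    omega
  · obtain ⟨c, -, hc⟩ := Finset.exists_mem_eq_sup (Finset.univ : Finset (Fin n))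
      ⟨⟨0, hn⟩, Finset.mem_univ _⟩ (fun c => D.d (D.o c))
    apply Polynomial.le_natDegree_of_ne_zero
    rw [coeff_Xpoly]
    have : c ∈ Finset.univ.filter fun c' => D.d (D.o c') =
        Finset.univ.sup fun c'' => D.d (D.o c'') := by
      simp only [Finset.mem_filter, Finset.mem_univ, true_and]
      exact hc.symm
    have h2 := Finset.card_pos.2 ⟨c, this⟩
    positivity

lemma Xpoly_natTrailingDegree (hn : 1 ≤ n) (D : GaussCode n) :
    D.Xpoly.natTrailingDegree
      = Finset.univ.inf' ⟨⟨0, hn⟩, Finset.mem_univ _⟩ fun c => D.d (D.o c) := by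
  apply le_antisymm
  · obtain ⟨c, -, hc⟩ := Finset.exists_mem_eq_inf' (s := (Finset.univ : Finset (Fin n)))
      ⟨⟨0, hn⟩, Finset.mem_univ _⟩ (fun c => D.d (D.o c))
    apply Polynomial.natTrailingDegree_le_of_ne_zero
    rw [coeff_Xpoly]
    have : c ∈ Finset.univ.filter fun c' => D.d (D.o c') =
        Finset.univ.inf' ⟨⟨0, hn⟩, Finset.mem_univ _⟩ fun c'' => D.d (D.o c'') := by
      simp only [Finset.mem_filter, Finset.mem_univ, true_and]
      exact hc.symm
    have h2 := Finset.card_pos.2 ⟨c, this⟩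
    positivity
  · apply Polynomial.le_natTrailingDegree (Xpoly_ne_zero hn D)
    intro m hm
    rw [coeff_Xpoly]
    norm_cast
    rw [Finset.card_eq_zero, Finset.filter_eq_empty_iff]
    intro c _
    have : (Finset.univ.inf' ⟨⟨0, hn⟩, Finset.mem_univ _⟩ fun c' => D.d (D.o c'))
        ≤ D.d (D.o c) := Finset.inf'_le _ (Finset.mem_univ _)
    omega






lemma span_aux (hn : 1 ≤ n) (D D' : GaussCode n) (c₀ : Fin n)
    (h1 : D'.g (D.o c₀) = (c₀, false))
    (h2 : D'.g (D.u c₀) = (c₀, true))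
    (h3 : ∀ e : ZMod (2 * n), e ≠ D.o c₀ → e ≠ D.u c₀ → D'.g e = D.g e) :
    D'.Xpoly.natDegree - D'.Xpoly.natTrailingDegree
      ≤ (D.Xpoly.natDegree - D.Xpoly.natTrailingDegree) + 2 := by
  have hO0 : D'.o c₀ = D.u c₀ := ((D'.over_iff c₀ _).1 h2).symm
  have hU0 : D'.u c₀ = D.o c₀ := ((D'.under_iff c₀ _).1 h1).symm
  have hO : ∀ c, c ≠ c₀ → D'.o c = D.o c := by
    intro c hc
    have ne1 : D.o c ≠ D.o c₀ := fun h => hc (D.o_inj h)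
    have ne2 : D.o c ≠ D.u c₀ := D.o_ne_u c c₀
    have hg : D'.g (D.o c) = (c, true) := by rw [h3 _ ne1 ne2, D.g_o]
    exact ((D'.over_iff c _).1 hg).symm
  have hU : ∀ c, c ≠ c₀ → D'.u c = D.u c := by
    intro c hc
    have ne1 : D.u c ≠ D.o c₀ := fun h => D.o_ne_u c₀ c h.symm
    have ne2 : D.u c ≠ D.u c₀ := fun h => hc (D.u_inj h)
    have hg : D'.g (D.u c) = (c, false) := by rw [h3 _ ne1 ne2, D.g_u]
    exact ((D'.under_iff c _).1 hg).symm
  set A := Finset.univ.sup fun c => D.d (D.o c) with hAdef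
  set a := Finset.univ.inf' ⟨⟨0, hn⟩, Finset.mem_univ _⟩ (fun c => D.d (D.o c)) with hadef
  have key : ∀ c : Fin n, D'.d (D'.o c) ≤ A + 1 ∧ a ≤ D'.d (D'.o c) + 1 := by
    intro c
    by_cases hc : c = c₀
    · subst hc
      rw [hO0]
      have hle := d_at_u hn D D' c hO hU hO0 hU0
      have hge := (d_close D D' c hO hU (D.u c)).2
      have h5 := d_u_le hn D c
      have h6 := d_u_ge hn D c
      rw [← hAdef] at h5
      rw [← hadef] at h6
      constructor <;> omega
    · rw [hO c hc]
      have hcl := d_close D D' c₀ hO hU (D.o c)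
      have h5 : D.d (D.o c) ≤ A := Finset.le_sup (f := fun c => D.d (D.o c)) (Finset.mem_univ _)
      have h6 : a ≤ D.d (D.o c) := Finset.inf'_le _ (Finset.mem_univ _)
      constructor <;> omega
  have haA : a ≤ A := by
    have h5 : D.d (D.o c₀) ≤ A := Finset.le_sup (f := fun c => D.d (D.o c)) (Finset.mem_univ _)
    have h6 : a ≤ D.d (D.o c₀) := Finset.inf'_le _ (Finset.mem_univ _)
    omega
  have hA' : D'.Xpoly.natDegree ≤ A + 1 := by
    rw [Xpoly_natDegree hn]
    exact Finset.sup_le fun c _ => (key c).1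
  have ha' : a ≤ D'.Xpoly.natTrailingDegree + 1 := by
    rw [Xpoly_natTrailingDegree hn]
    obtain ⟨c, -, hc⟩ := Finset.exists_mem_eq_inf'
      (s := (Finset.univ : Finset (Fin n))) ⟨⟨0, hn⟩, Finset.mem_univ _⟩
      (fun c => D'.d (D'.o c))
    rw [hc]
    exact (key c).2
  have htr' : D'.Xpoly.natTrailingDegree ≤ D'.Xpoly.natDegree :=
    Polynomial.natTrailingDegree_le_natDegree _
  rw [Xpoly_natDegree hn D, Xpoly_natTrailingDegree hn D, ← hAdef, ← hadef]
  omega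




end GaussCode

/-- The spans of the warping crossing polynomials of `D` and of the diagram obtained
by a crossing change differ by at most 2. -/
theorem crossing_change_span
    (n : ℕ) (hn : 1 ≤ n) (D D' : GaussCode n) (c₀ : Fin n)
    (h1 : D'.g (D.o c₀) = (c₀, false))
    (h2 : D'.g (D.u c₀) = (c₀, true))
    (h3 : ∀ e : ZMod (2 * n), e ≠ D.o c₀ → e ≠ D.u c₀ → D'.g e = D.g e) :
    |((D'.Xpoly.natDegree - D'.Xpoly.natTrailingDegree : ℕ) : ℤ)
      - ((D.Xpoly.natDegree - D.Xpoly.natTrailingDegree : ℕ) : ℤ)| ≤ 2 := by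
  have hO0 : D'.o c₀ = D.u c₀ := ((D'.over_iff c₀ _).1 h2).symm
  have hU0 : D'.u c₀ = D.o c₀ := ((D'.under_iff c₀ _).1 h1).symm
  have H1 := GaussCode.span_aux hn D D' c₀ h1 h2 h3
  have H2 := GaussCode.span_aux hn D' D c₀
    (by rw [hO0]; exact D.g_u c₀)
    (by rw [hU0]; exact D.g_o c₀)
    (by
      intro e he1 he2
      rw [hO0] at he1
      rw [hU0] at he2
      exact (h3 e he2 he1).symm)
  rw [abs_le]
  constructor <;> omega
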